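/- Let A, B, C be subspaces of E. If A ⊥g∘ B and A ∩ B ⊆ C ⊆ A, then A ⊥g∘ (B ⊔ C). -/

import Mathlib

/-- `Perp X Y`: every vector in the direction of `X` is orthogonal to every
vector in the direction of `Y`. -/
def Perp {E : Type*} [NormedAddCommGroup E] [InnerProductSpace ℝ E]
    (X Y : AffineSubspace ℝ E) : Prop :=
  ∀ u ∈ X.direction, ∀ v ∈ Y.direction, (inner ℝ u v : ℝ) = 0

/-- `PerpX X Y`: `X ⊥ Y` and `X ∩ Y ≠ ∅`. -/
def PerpX {E : Type*} [NormedAddCommGroup E] [InnerProductSpace ℝ E]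
    (X Y : AffineSubspace ℝ E) : Prop :=
  Perp X Y ∧ ((X : Set E) ∩ (Y : Set E)).Nonempty

/-- `PerpGo X₁ X₂`: the relation `⊥g∘`. -/
def PerpGo {E : Type*} [NormedAddCommGroup E] [InnerProductSpace ℝ E]
    (X₁ X₂ : AffineSubspace ℝ E) : Prop :=
  ∃ q : E, q ∈ X₁ ⊓ X₂ ∧ ∃ Z₁ Z₂ : AffineSubspace ℝ E,
    q ∈ Z₁ ∧ q ∈ Z₂ ∧ PerpX Z₁ (X₁ ⊓ X₂) ∧ PerpX Z₂ (X₁ ⊓ X₂) ∧ PerpX Z₁ Z₂ ∧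
    (X₁ ⊓ X₂) ⊔ Z₁ = X₁ ∧ (X₁ ⊓ X₂) ⊔ Z₂ = X₂

/-- `PerpG X₁ X₂`: the relation `⊥g`. -/
def PerpG {E : Type*} [NormedAddCommGroup E] [InnerProductSpace ℝ E]
    (X₁ X₂ : AffineSubspace ℝ E) : Prop :=
  PerpGo X₁ X₂ ∧ X₁ ⊓ X₂ ≠ X₁ ∧ X₁ ⊓ X₂ ≠ X₂

/-- Dimension of an affine subspace: the dimension of its direction. -/
noncomputable def adim {E : Type*} [NormedAddCommGroup E] [InnerProductSpace ℝ E]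
    (X : AffineSubspace ℝ E) : ℕ :=
  Module.finrank ℝ X.direction

variable {E : Type*} [NormedAddCommGroup E] [InnerProductSpace ℝ E] [FiniteDimensional ℝ E]

lemma direction_sup_of_mem {s1 s2 : AffineSubspace ℝ E} {q : E} (h1 : q ∈ s1) (h2 : q ∈ s2) :
    (s1 ⊔ s2).direction = s1.direction ⊔ s2.direction := by
  rw [AffineSubspace.direction_sup h1 h2, vsub_self, Submodule.span_zero_singleton, sup_bot_eq]

theorem stmt18 (A B C : AffineSubspace ℝ E)
    (hA : (A : Set E).Nonempty) (hB : (B : Set E).Nonempty) (hC : (C : Set E).Nonempty)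
    (h₁ : PerpGo A B) (h₂ : A ⊓ B ≤ C) (h₃ : C ≤ A) :
    PerpGo A (B ⊔ C) := by
  obtain ⟨q, hq, Z₁, Z₂, hqZ₁, hqZ₂, hZ₁, hZ₂, hZ₁Z₂, hsup₁, hsup₂⟩ := h₁
  have hqA : q ∈ A := hq.1
  have hqB : q ∈ B := hq.2
  have hqC : q ∈ C := h₂ hq
  -- direction facts
  have hdA : A.direction = (A ⊓ B).direction ⊔ Z₁.direction := by
    conv_lhs => rw [← hsup₁]
    exact direction_sup_of_mem hq hqZ₁
  have hdB : B.direction = (A ⊓ B).direction ⊔ Z₂.direction := by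
    conv_lhs => rw [← hsup₂]
    exact direction_sup_of_mem hq hqZ₂
  have hMC : (A ⊓ B).direction ≤ C.direction := AffineSubspace.direction_le h₂
  have hCA : C.direction ≤ A.direction := AffineSubspace.direction_le h₃
  -- Z₂ ⊥ A
  have hZ₂A : ∀ u ∈ Z₂.direction, ∀ v ∈ A.direction, (inner ℝ u v : ℝ) = 0 := by
    intro u hu v hv
    rw [hdA] at hv
    obtain ⟨m, hm, z, hz, rfl⟩ := Submodule.mem_sup.1 hv
    have h1 : (inner ℝ u m : ℝ) = 0 := hZ₂.1 u hu m hm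
    have h2 : (inner ℝ u z : ℝ) = 0 := by
      have := hZ₁Z₂.1 z hz u hu
      rwa [real_inner_comm] at this
    rw [inner_add_right, h1, h2, add_zero]
  -- direction of B ⊔ C
  have hdBC : (B ⊔ C).direction = C.direction ⊔ Z₂.direction := by
    rw [direction_sup_of_mem hqB hqC, hdB, sup_assoc,
      sup_comm Z₂.direction C.direction, ← sup_assoc, sup_eq_right.2 hMC]
  -- A ⊓ (B ⊔ C) = C
  have hqBC : q ∈ B ⊔ C := (le_sup_left : B ≤ B ⊔ C) hqB
  have hinf : A ⊓ (B ⊔ C) = C := by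
    apply AffineSubspace.ext_of_direction_eq
    · rw [AffineSubspace.direction_inf_of_mem hqA hqBC]
      · apply le_antisymm
        · intro v hv
          obtain ⟨hvA, hvBC⟩ := hv
          rw [hdBC] at hvBC
          obtain ⟨c, hc, z, hz, rfl⟩ := Submodule.mem_sup.1 hvBC
          have hzA : z ∈ A.direction := by
            have := Submodule.sub_mem _ hvA (hCA hc)
            rwa [add_sub_cancel_left] at this
          have : (inner ℝ z z : ℝ) = 0 := hZ₂A z hz z hzA
          have hz0 : z = 0 := by
            have := inner_self_eq_zero (𝕜 := ℝ).1 this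
            exact this
          rw [hz0, add_zero]
          exact hc
        · exact le_inf hCA (hdBC ▸ le_sup_left)
    · exact ⟨q, ⟨hqA, hqBC⟩, hqC⟩
  -- the new Z₁'
  set W : Submodule ℝ E := C.directionᗮ ⊓ A.direction with hW
  have hWsup : C.direction ⊔ W = A.direction :=
    Submodule.sup_orthogonal_inf_of_hasOrthogonalProjection hCA
  refine ⟨q, ⟨hqA, hqBC⟩, AffineSubspace.mk' q W, Z₂,
    AffineSubspace.self_mem_mk' q W, hqZ₂, ?_, ?_, ?_, ?_, ?_⟩
  · constructor
    · intro u hu v hv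
      rw [AffineSubspace.direction_mk'] at hu
      rw [hinf] at hv
      have := hu.1 v hv
      rwa [real_inner_comm] at this
    · exact ⟨q, AffineSubspace.self_mem_mk' q W, hqA, hqBC⟩
  · constructor
    · intro u hu v hv
      rw [hinf] at hv
      exact hZ₂A u hu v (hCA hv)
    · exact ⟨q, hqZ₂, hqA, hqBC⟩
  · constructor
    · intro u hu v hv
      rw [AffineSubspace.direction_mk'] at hu
      have := hZ₂A v hv u hu.2
      rwa [real_inner_comm] at this
    · exact ⟨q, AffineSubspace.self_mem_mk' q W, hqZ₂⟩
  · rw [hinf]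
    apply AffineSubspace.ext_of_direction_eq
    · rw [direction_sup_of_mem hqC (AffineSubspace.self_mem_mk' q W),
        AffineSubspace.direction_mk', hWsup]
    · exact ⟨q, (le_sup_left : C ≤ C ⊔ _) hqC, hqA⟩
  · rw [hinf]
    apply AffineSubspace.ext_of_direction_eq
    · rw [direction_sup_of_mem hqC hqZ₂, hdBC]
    · exact ⟨q, (le_sup_left : C ≤ C ⊔ _) hqC, hqBC⟩
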